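/- Let G be a topological group and W a nonempty topological space. Every weakly G-equivariant self-homeomorphism f of G × W (i.e., one for which there exists a continuous automorphism α of G with f(a·x,w) = ℓ(α(a))(f(x,w)) for all a,x,w) can be written uniquely in the form f(x,w) = (α(x)·(λ(h(w)))⁻¹, h(w)), where λ : W → G is a continuous map, α is a continuous automorphism of G, and h is a self-homeomorphism of W. -/

import Mathlib

/-- Every weakly `G`-equivariant self-homeomorphism `f` of `G × W` (one for which
there is a continuous automorphism `α` of `G` with
`f (a * x, w) = ℓ (α a) (f (x, w))`) can be written uniquely in the form
`f (x, w) = (α x * (λ (h w))⁻¹, h w)` with `λ : W → G` continuous, `α` a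
continuous automorphism of `G`, and `h` a self-homeomorphism of `W`. -/
theorem weakly_equivariant_normal_form
    {G W : Type*} [Group G] [TopologicalSpace G] [IsTopologicalGroup G]
    [TopologicalSpace W] [Nonempty W] (f : (G × W) ≃ₜ (G × W))
    (hweak : ∃ α : G ≃ₜ G, (∀ x y : G, α (x * y) = α x * α y) ∧
      ∀ (a x : G) (w : W), f (a * x, w) = (α a * (f (x, w)).1, (f (x, w)).2)) :
    ∃ (lam : W → G) (α : G ≃ₜ G) (h : W ≃ₜ W),
      Continuous lam ∧ (∀ x y : G, α (x * y) = α x * α y) ∧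
      (∀ (x : G) (w : W), f (x, w) = (α x * (lam (h w))⁻¹, h w)) ∧
      ∀ (lam' : W → G) (α' : G ≃ₜ G) (h' : W ≃ₜ W),
        Continuous lam' → (∀ x y : G, α' (x * y) = α' x * α' y) →
        (∀ (x : G) (w : W), f (x, w) = (α' x * (lam' (h' w))⁻¹, h' w)) →
        lam' = lam ∧ α' = α ∧ h' = h := by
  obtain ⟨α, hmul, heq⟩ := hweak
  have hα1 : α 1 = 1 := by
    have := hmul 1 1; rw [mul_one] at this
    exact mul_eq_left.mp this.symm
  -- key: f (x, w) = (α x * (f (1,w)).1, (f (1,w)).2)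
  have hmain : ∀ (x : G) (w : W), f (x, w) = (α x * (f (1, w)).1, (f (1, w)).2) := by
    intro x w
    have := heq x 1 w; rwa [mul_one] at this
  -- equivariance of f.symm
  have hsymm : ∀ (b y : G) (w : W),
      f.symm (b * y, w) = (α.symm b * (f.symm (y, w)).1, (f.symm (y, w)).2) := by
    intro b y w
    apply f.injective
    rw [f.apply_symm_apply]
    have := heq (α.symm b) (f.symm (y, w)).1 (f.symm (y, w)).2
    rw [Prod.mk.eta, f.apply_symm_apply] at this
    rw [this, α.apply_symm_apply]
  have hsnd_symm : ∀ (x : G) (w : W), (f.symm (x, w)).2 = (f.symm (1, w)).2 := by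
    intro x w
    have := hsymm x 1 w; rw [mul_one] at this; rw [this]
  have hsnd : ∀ (x : G) (w : W), (f (x, w)).2 = (f (1, w)).2 :=
    fun x w => by rw [hmain x w]
  have left_inv : ∀ w : W, (f.symm (1, (f (1, w)).2)).2 = w := by
    intro w
    rw [← hsnd_symm (f (1, w)).1 (f (1, w)).2, Prod.mk.eta, f.symm_apply_apply]
  have right_inv : ∀ w : W, (f (1, (f.symm (1, w)).2)).2 = w := by
    intro w
    rw [← hsnd (f.symm (1, w)).1 (f.symm (1, w)).2, Prod.mk.eta, f.apply_symm_apply]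
  let h : W ≃ₜ W :=
    { toFun := fun w => (f (1, w)).2
      invFun := fun w => (f.symm (1, w)).2
      left_inv := left_inv
      right_inv := right_inv
      continuous_toFun := (f.continuous.comp (continuous_const.prodMk continuous_id)).snd
      continuous_invFun :=
        (f.symm.continuous.comp (continuous_const.prodMk continuous_id)).snd }
  let lam : W → G := fun v => ((f (1, h.symm v)).1)⁻¹
  have hlamc : Continuous lam :=
    ((f.continuous.comp (continuous_const.prodMk h.symm.continuous)).fst).inv
  have hform : ∀ (x : G) (w : W), f (x, w) = (α x * (lam (h w))⁻¹, h w) := by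
    intro x w
    have : lam (h w) = ((f (1, w)).1)⁻¹ := by
      simp only [lam]
      rw [h.symm_apply_apply]
    rw [this, inv_inv]
    exact hmain x w
  refine ⟨lam, α, h, hlamc, hmul, hform, ?_⟩
  intro lam' α' h' hc' hmul' heq'
  have hα'1 : α' 1 = 1 := by
    have := hmul' 1 1; rw [mul_one] at this
    exact mul_eq_left.mp this.symm
  have hh : ∀ w, h' w = h w := fun w =>
    congrArg Prod.snd ((heq' 1 w).symm.trans (hform 1 w))
  have hlam : ∀ w, lam' w = lam w := by
    intro w
    have hv : h (h.symm w) = w := h.apply_symm_apply w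
    have h1 := congrArg Prod.fst ((heq' 1 (h.symm w)).symm.trans (hform 1 (h.symm w)))
    simp only [hα'1, hα1, one_mul] at h1
    rw [hh, hv] at h1
    exact inv_injective h1
  have hα : ∀ x, α' x = α x := by
    intro x
    obtain ⟨w⟩ := ‹Nonempty W›
    have h1 := congrArg Prod.fst ((heq' x w).symm.trans (hform x w))
    rw [hh, hlam] at h1
    exact mul_right_cancel h1
  exact ⟨funext hlam, Homeomorph.ext hα, Homeomorph.ext hh⟩
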